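/- For 1/3 ≤ v < 1, the function β ↦ 1 + (1+β)²/((1+βv)(β-1)) is decreasing on β > 1 and its infimum as β → ∞ equals 1 + 1/v. -/

import Mathlib

open Filter

/-- For `1/3 ≤ v < 1` the cone lower-bound function is decreasing on `β > 1` and
tends to `1 + 1/v` as `β → ∞`. -/
theorem cone_lower_fast (v : ℝ) (hv : 1/3 ≤ v) (hv1 : v < 1) :
    StrictAntiOn (fun β : ℝ => 1 + (1 + β) ^ 2 / ((1 + β * v) * (β - 1))) (Set.Ioi 1) ∧
    Tendsto (fun β : ℝ => 1 + (1 + β) ^ 2 / ((1 + β * v) * (β - 1))) atTop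
      (nhds (1 + 1 / v)) := by
  have hv0 : 0 < v := lt_of_lt_of_le (by norm_num) hv
  constructor
  · intro a ha b hb hab
    simp only [Set.mem_Ioi] at ha hb
    have ha1 : 0 < a - 1 := by linarith
    have hb1 : 0 < b - 1 := by linarith
    have hav : 0 < 1 + a * v := by nlinarith
    have hbv : 0 < 1 + b * v := by nlinarith
    have hda : 0 < (1 + a * v) * (a - 1) := mul_pos hav ha1
    have hdb : 0 < (1 + b * v) * (b - 1) := mul_pos hbv hb1
    have key : 0 < (b - a) * ((3 * v - 1) * (a * b) + (1 + v) * (a + b) + (3 - v)) := by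
      apply mul_pos (by linarith)
      have h1 : 0 ≤ (3 * v - 1) * (a * b) := by
        apply mul_nonneg (by linarith)
        positivity
      nlinarith
    simp only
    apply (add_lt_add_iff_left 1).mpr
    rw [div_lt_div_iff₀ hdb hda]
    nlinarith [key]
  · have h0 : Tendsto (fun β : ℝ => β⁻¹) atTop (nhds 0) := tendsto_inv_atTop_zero
    have hnum : Tendsto (fun β : ℝ => (β⁻¹ + 1) ^ 2) atTop (nhds 1) := by
      have := ((h0.add (tendsto_const_nhds (x := (1:ℝ)))).pow 2)
      simpa using this
    have hden : Tendsto (fun β : ℝ => (β⁻¹ + v) * (1 - β⁻¹)) atTop (nhds v) := by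
      have := (h0.add (tendsto_const_nhds (x := v))).mul
        ((tendsto_const_nhds (x := (1:ℝ))).sub h0)
      simpa using this
    have hdiv : Tendsto (fun β : ℝ => (β⁻¹ + 1) ^ 2 / ((β⁻¹ + v) * (1 - β⁻¹))) atTop
        (nhds (1 / v)) := hnum.div hden (ne_of_gt hv0)
    have heq : ∀ᶠ β : ℝ in atTop,
        (β⁻¹ + 1) ^ 2 / ((β⁻¹ + v) * (1 - β⁻¹)) = (1 + β) ^ 2 / ((1 + β * v) * (β - 1)) := by
      filter_upwards [eventually_gt_atTop (1 : ℝ)] with β hβ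
      have hβ0 : β ≠ 0 := by linarith
      rw [div_eq_div_iff]
      · field_simp
      · have : 0 < (β⁻¹ + v) * (1 - β⁻¹) := by
          apply mul_pos
          · positivity
          · rw [sub_pos, inv_lt_one_iff₀]; right; exact hβ
        exact ne_of_gt this
      · have hav : 0 < 1 + β * v := by nlinarith
        exact ne_of_gt (mul_pos hav (by linarith))
    have := (hdiv.congr' heq)
    have final := tendsto_const_nhds (x := (1:ℝ)) |>.add this
    simpa using final
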